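/- Let n ≥ 1 and let p(t) = ∑_{k=1}^n [a_k cos(kt+θ_k) + b_k sin(kt+θ_k)] be a real trigonometric polynomial with real coefficients a_k, b_k, θ_k, not all of the a_k, b_k being zero. Then for every interval [α,β] with β − α ≤ 2π and every δ > 0, (1/(2δ)) ∫_α^β |p'(t)| 1_{{|p(t)| < δ}} dt ≤ 6n. -/

import Mathlib

open MeasureTheory Real

private lemma fInt (p q : ℝ → ℝ) (hp : Continuous p) (hq : Continuous q) (δ : ℝ) (u v : ℝ) :
    IntervalIntegrable (fun t => if |p t| < δ then |q t| else 0) volume u v := by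
  apply (hq.abs.intervalIntegrable u v).mono_fun
  · exact (Measurable.ite ((isOpen_lt (hp.abs) continuous_const).measurableSet)
      hq.abs.measurable measurable_const).aestronglyMeasurable
  · filter_upwards with t
    simp only [Real.norm_eq_abs]
    split <;> simp [abs_abs, abs_nonneg]

private lemma pieceA0 (p q : ℝ → ℝ) (hpq : ∀ t, HasDerivAt p (q t) t)
    (hq : Continuous q) {δ : ℝ} (hδ : 0 < δ) {u v : ℝ} (huv : u ≤ v)
    (hpos : ∀ t ∈ Set.Ioo u v, 0 < q t) :
    (∫ t in u..v, if |p t| < δ then |q t| else 0) ≤ 2 * δ := by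
  have hp : Continuous p := by
    rw [continuous_iff_continuousAt]; exact fun t => (hpq t).continuousAt
  rcases eq_or_lt_of_le huv with rfl | hlt
  · simp [intervalIntegral.integral_same]; positivity
  have hq0 : ∀ t ∈ Set.Icc u v, 0 ≤ q t := by
    have hs : Set.Icc u v ⊆ {t | 0 ≤ q t} := by
      rw [← closure_Ioo hlt.ne]
      exact closure_minimal (fun t ht => (hpos t ht).le)
        (isClosed_le continuous_const hq)
    exact fun t ht => hs ht
  set S : Set ℝ := {t ∈ Set.Icc u v | |p t| < δ} with hS
  by_cases hSne : S.Nonempty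
  swap
  · have : (∫ t in u..v, if |p t| < δ then |q t| else 0) = ∫ t in u..v, (0:ℝ) := by
      apply intervalIntegral.integral_congr
      intro t ht
      rw [Set.uIcc_of_le huv] at ht
      have : ¬ (|p t| < δ) := fun h => hSne ⟨t, ht, h⟩
      simp [this]
    rw [this]; simp; positivity
  obtain ⟨t₀, ht₀⟩ := hSne
  have hSb : S ⊆ Set.Icc u v := fun t ht => ht.1
  have hbdd : BddBelow S := ⟨u, fun t ht => (hSb ht).1⟩
  have hbdda : BddAbove S := ⟨v, fun t ht => (hSb ht).2⟩
  set c := sInf S with hc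
  set d := sSup S with hd
  have hcd : c ≤ d := le_trans (csInf_le hbdd ht₀) (le_csSup hbdda ht₀)
  have huc : u ≤ c := le_csInf ⟨t₀, ht₀⟩ (fun t ht => (hSb ht).1)
  have hdv : d ≤ v := csSup_le ⟨t₀, ht₀⟩ (fun t ht => (hSb ht).2)
  have hclos : closure S ⊆ {t | |p t| ≤ δ} := by
    apply closure_minimal (fun t ht => ht.2.le)
    exact isClosed_le (continuous_abs.comp hp) continuous_const
  have hpc : |p c| ≤ δ := hclos (csInf_mem_closure ⟨t₀, ht₀⟩ hbdd)
  have hpd : |p d| ≤ δ := hclos (csSup_mem_closure ⟨t₀, ht₀⟩ hbdda)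
  set g : ℝ → ℝ := (Set.Icc c d).indicator (fun t => |q t|) with hg
  have hgint : ∀ x y : ℝ, IntervalIntegrable g volume x y := by
    intro x y
    apply (hq.abs.intervalIntegrable x y).mono_fun
    · exact ((hq.abs.measurable).indicator measurableSet_Icc).aestronglyMeasurable
    · filter_upwards with t
      simp only [Real.norm_eq_abs, hg]
      by_cases h : t ∈ Set.Icc c d <;> simp [h, abs_abs, abs_nonneg]
  have hmono : (∫ t in u..v, if |p t| < δ then |q t| else 0) ≤ ∫ t in u..v, g t := by
    apply intervalIntegral.integral_mono_on huv (fInt p q hp hq δ u v) (hgint u v)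
    intro t ht
    by_cases h : |p t| < δ
    · have : t ∈ S := ⟨ht, h⟩
      have htm : t ∈ Set.Icc c d := ⟨csInf_le hbdd this, le_csSup hbdda this⟩
      simp [h, hg, Set.indicator_of_mem htm]
    · simp only [h, if_false, hg]
      exact Set.indicator_nonneg (fun s _ => abs_nonneg _) t
  have hsplit : (∫ t in u..v, g t)
      = (∫ t in u..c, g t) + (∫ t in c..d, g t) + ∫ t in d..v, g t := by
    rw [intervalIntegral.integral_add_adjacent_intervals (hgint u c) (hgint c d),
        intervalIntegral.integral_add_adjacent_intervals
          ((hgint u c).trans (hgint c d)) (hgint d v)]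
  have haec : ∀ᵐ t : ℝ ∂volume, t ≠ c := by
    rw [ae_iff]; simp only [not_not, Set.setOf_eq_eq_singleton]
    exact Real.volume_singleton
  have hz1 : (∫ t in u..c, g t) = 0 := by
    have : (∫ t in u..c, g t) = ∫ t in u..c, (0:ℝ) := by
      apply intervalIntegral.integral_congr_ae
      filter_upwards [haec] with t htne hmem
      rw [Set.uIoc_of_le huc] at hmem
      have htc : ¬ (t ∈ Set.Icc c d) := fun hm => htne (le_antisymm hmem.2 hm.1)
      simp [hg, Set.indicator_of_notMem htc]
    simpa using this
  have hz2 : (∫ t in d..v, g t) = 0 := by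
    have : (∫ t in d..v, g t) = ∫ t in d..v, (0:ℝ) := by
      apply intervalIntegral.integral_congr_ae
      filter_upwards with t hmem
      rw [Set.uIoc_of_le hdv] at hmem
      have htc : ¬ (t ∈ Set.Icc c d) := fun hm => absurd hm.2 (not_le.2 hmem.1)
      simp [hg, Set.indicator_of_notMem htc]
    simpa using this
  have hmid : (∫ t in c..d, g t) = p d - p c := by
    have h1 : (∫ t in c..d, g t) = ∫ t in c..d, q t := by
      apply intervalIntegral.integral_congr
      intro t ht
      rw [Set.uIcc_of_le hcd] at ht
      have htuv : t ∈ Set.Icc u v := ⟨huc.trans ht.1, ht.2.trans hdv⟩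
      simp [hg, Set.indicator_of_mem ht, abs_of_nonneg (hq0 t htuv)]
    rw [h1]
    exact intervalIntegral.integral_eq_sub_of_hasDerivAt (fun t _ => hpq t)
      (hq.intervalIntegrable c d)
  rw [hsplit, hz1, hz2, hmid] at hmono
  have h1 := abs_le.1 hpc
  have h2 := abs_le.1 hpd
  linarith

private lemma pieceA (p q : ℝ → ℝ) (hpq : ∀ t, HasDerivAt p (q t) t)
    (hq : Continuous q) {δ : ℝ} (hδ : 0 < δ) {u v : ℝ} (huv : u ≤ v)
    (hne : ∀ t ∈ Set.Ioo u v, q t ≠ 0) :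
    (∫ t in u..v, if |p t| < δ then |q t| else 0) ≤ 2 * δ := by
  have hdicho : (∀ t ∈ Set.Ioo u v, 0 < q t) ∨ (∀ t ∈ Set.Ioo u v, q t < 0) := by
    by_contra h
    push_neg at h
    obtain ⟨⟨t₁, ht₁, h₁⟩, ⟨t₂, ht₂, h₂⟩⟩ := h
    have h₁' : q t₁ < 0 := lt_of_le_of_ne h₁ (hne t₁ ht₁)
    have h₂' : 0 < q t₂ := lt_of_le_of_ne h₂ (Ne.symm (hne t₂ ht₂))
    have hsub : Set.uIcc t₁ t₂ ⊆ Set.Ioo u v :=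
      (Set.ordConnected_Ioo).uIcc_subset ht₁ ht₂
    have := intermediate_value_uIcc (hq.continuousOn (s := Set.uIcc t₁ t₂))
    have h0 : (0:ℝ) ∈ Set.uIcc (q t₁) (q t₂) := by
      rw [Set.mem_uIcc]; left; exact ⟨h₁'.le, h₂'.le⟩
    obtain ⟨t, ht, hqt⟩ := this h0
    exact hne t (hsub ht) hqt
  rcases hdicho with hpos | hneg
  · exact pieceA0 p q hpq hq hδ huv hpos
  · have := pieceA0 (fun t => -p t) (fun t => -q t) (fun t => (hpq t).neg) hq.neg hδ huv
      (fun t ht => neg_pos.2 (hneg t ht))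
    simpa [abs_neg] using this

private lemma lemB (p q : ℝ → ℝ) (hpq : ∀ t, HasDerivAt p (q t) t) (hq : Continuous q)
    {δ : ℝ} (hδ : 0 < δ) (s : Finset ℝ) :
    ∀ u v : ℝ, u ≤ v → (∀ t ∈ Set.Ioo u v, q t = 0 → t ∈ s) →
    (∫ t in u..v, if |p t| < δ then |q t| else 0) ≤ (s.card + 1) * (2 * δ) := by
  have hp : Continuous p := by
    rw [continuous_iff_continuousAt]; exact fun t => (hpq t).continuousAt
  induction s using Finset.strongInduction with
  | _ s ih =>
    intro u v huv hz
    by_cases hex : ∃ z ∈ Set.Ioo u v, q z = 0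
    · obtain ⟨z, hzmem, hqz⟩ := hex
      have hzs : z ∈ s := hz z hzmem hqz
      set s₁ := s.filter (fun x => x < z) with hs₁
      set s₂ := s.filter (fun x => z < x) with hs₂
      have h₁ : s₁ ⊂ s := by
        refine ⟨Finset.filter_subset _ _, fun hsub => ?_⟩
        have := hsub hzs
        rw [hs₁, Finset.mem_filter] at this
        exact absurd this.2 (lt_irrefl z)
      have h₂ : s₂ ⊂ s := by
        refine ⟨Finset.filter_subset _ _, fun hsub => ?_⟩
        have := hsub hzs
        rw [hs₂, Finset.mem_filter] at this
        exact absurd this.2 (lt_irrefl z)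
      have ih₁ := ih s₁ h₁ u z hzmem.1.le (fun t ht hqt => by
        rw [hs₁, Finset.mem_filter]
        exact ⟨hz t ⟨ht.1, ht.2.trans hzmem.2⟩ hqt, ht.2⟩)
      have ih₂ := ih s₂ h₂ z v hzmem.2.le (fun t ht hqt => by
        rw [hs₂, Finset.mem_filter]
        exact ⟨hz t ⟨hzmem.1.trans ht.1, ht.2⟩ hqt, ht.1⟩)
      have hsplit := intervalIntegral.integral_add_adjacent_intervals
        (fInt p q hp hq δ u z) (fInt p q hp hq δ z v)
      have hcard : s₁.card + s₂.card + 1 ≤ s.card := by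
        have hdisj : Disjoint s₁ s₂ := by
          rw [Finset.disjoint_left]
          intro x hx₁ hx₂
          rw [hs₁, Finset.mem_filter] at hx₁
          rw [hs₂, Finset.mem_filter] at hx₂
          exact absurd (hx₁.2.trans hx₂.2) (lt_irrefl x)
        have hznot : z ∉ s₁ ∪ s₂ := by
          simp [hs₁, hs₂]
        have hsub : insert z (s₁ ∪ s₂) ⊆ s := by
          intro x hx
          rcases Finset.mem_insert.1 hx with rfl | hx
          · exact hzs
          · rcases Finset.mem_union.1 hx with hx | hx
            · exact Finset.filter_subset _ _ hx
            · exact Finset.filter_subset _ _ hx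
        have := Finset.card_le_card hsub
        rw [Finset.card_insert_of_notMem hznot, Finset.card_union_of_disjoint hdisj] at this
        omega
      have h2δ : (0:ℝ) < 2 * δ := by linarith
      have hle : ((s₁.card : ℝ) + 1) + ((s₂.card : ℝ) + 1) ≤ (s.card : ℝ) + 1 := by
        have : (s₁.card : ℝ) + (s₂.card : ℝ) + 1 ≤ (s.card : ℝ) := by exact_mod_cast hcard
        linarith
      calc (∫ t in u..v, if |p t| < δ then |q t| else 0)
          = (∫ t in u..z, if |p t| < δ then |q t| else 0)
            + ∫ t in z..v, if |p t| < δ then |q t| else 0 := hsplit.symm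
        _ ≤ (s₁.card + 1) * (2 * δ) + (s₂.card + 1) * (2 * δ) := add_le_add ih₁ ih₂
        _ ≤ (s.card + 1) * (2 * δ) := by nlinarith
    · push_neg at hex
      have := pieceA p q hpq hq hδ huv hex
      have h1 : (2:ℝ) * δ ≤ (s.card + 1) * (2 * δ) := by
        have : (0:ℝ) ≤ (s.card : ℝ) := Nat.cast_nonneg _
        nlinarith
      linarith

private lemma keyid (A B x : ℝ) :
    ((B:ℂ) + A * Complex.I) * Complex.exp (x * Complex.I)
      + ((B:ℂ) - A * Complex.I) * Complex.exp (-(x * Complex.I))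
      = 2 * ((B * Real.cos x - A * Real.sin x : ℝ) : ℂ) := by
  rw [Complex.exp_mul_I]
  rw [show -((x:ℂ) * Complex.I) = (-x : ℝ) * Complex.I by push_cast; ring, Complex.exp_mul_I]
  push_cast [← Complex.ofReal_cos, ← Complex.ofReal_sin]
  simp [Real.cos_neg, Real.sin_neg]
  ring_nf
  simp [Complex.I_sq]
  ring

private lemma zeroCount (n : ℕ) (hn : 1 ≤ n) (a b θ : ℕ → ℝ)
    (hnz : ∃ k ∈ Finset.Icc 1 n, a k ≠ 0 ∨ b k ≠ 0) (α β : ℝ) (hlen : β - α ≤ 2 * π) :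
    ∃ s : Finset ℝ, s.card ≤ 2 * n ∧ ∀ t ∈ Set.Ioo α β,
      (∑ k ∈ Finset.Icc 1 n,
        (k : ℝ) * (-(a k) * Real.sin (k * t + θ k) + b k * Real.cos (k * t + θ k))) = 0 →
      t ∈ s := by
  set I := Complex.I
  set q : ℝ → ℝ := fun t => ∑ k ∈ Finset.Icc 1 n,
      (k : ℝ) * (-(a k) * Real.sin (k * t + θ k) + b k * Real.cos (k * t + θ k)) with hqdef
  set c : ℕ → ℂ := fun k => (k : ℂ) * ((b k : ℂ) + (a k : ℂ) * I) * Complex.exp ((θ k : ℂ) * I)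
    with hcdef
  set P : Polynomial ℂ := ∑ k ∈ Finset.Icc 1 n,
      (Polynomial.C (c k) * Polynomial.X ^ (n + k)
        + Polynomial.C ((starRingEnd ℂ) (c k)) * Polynomial.X ^ (n - k)) with hPdef
  have heval : ∀ t : ℝ, P.eval (Complex.exp (t * I))
      = 2 * Complex.exp ((n : ℂ) * t * I) * (q t : ℂ) := by
    intro t
    rw [hPdef]
    rw [Polynomial.eval_finset_sum]
    have : ((q t : ℝ) : ℂ) = ∑ k ∈ Finset.Icc 1 n,
        (((k : ℝ) * (-(a k) * Real.sin (k * t + θ k) + b k * Real.cos (k * t + θ k)) : ℝ) : ℂ) := by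
      rw [hqdef]; push_cast; ring
    rw [this, Finset.mul_sum]
    apply Finset.sum_congr rfl
    intro k hk
    obtain ⟨hk1, hkn⟩ := Finset.mem_Icc.1 hk
    simp only [Polynomial.eval_add, Polynomial.eval_mul, Polynomial.eval_C, Polynomial.eval_pow,
      Polynomial.eval_X]
    rw [← Complex.exp_nat_mul, ← Complex.exp_nat_mul]
    have hconj : (starRingEnd ℂ) (c k)
        = (k : ℂ) * ((b k : ℂ) - (a k : ℂ) * I) * Complex.exp (-((θ k : ℂ) * I)) := by
      rw [hcdef]
      simp only [map_mul, ← Complex.exp_conj, map_add, Complex.conj_ofReal, I, Complex.conj_I,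
        Complex.conj_natCast]
      ring_nf
    rw [hconj, hcdef]
    have hnk : ((n - k : ℕ) : ℂ) = (n : ℂ) - (k : ℂ) := by
      push_cast [Nat.cast_sub hkn]; ring
    rw [hnk]
    have e1 : Complex.exp (((n + k : ℕ) : ℂ) * ((t:ℂ) * I))
        = Complex.exp ((n:ℂ) * t * I) * Complex.exp (((k:ℝ) * t : ℝ) * I) := by
      rw [← Complex.exp_add]; push_cast; ring_nf
    have e2 : Complex.exp (((n:ℂ) - (k:ℂ)) * ((t:ℂ) * I))
        = Complex.exp ((n:ℂ) * t * I) * Complex.exp (-((((k:ℝ) * t : ℝ) : ℂ) * I)) := by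
      rw [← Complex.exp_add]; push_cast; ring_nf
    rw [e1, e2]
    have e3 : (k : ℂ) * ((b k : ℂ) + (a k : ℂ) * I) * Complex.exp ((θ k : ℂ) * I)
          * (Complex.exp ((n:ℂ) * t * I) * Complex.exp (((k:ℝ) * t : ℝ) * I))
        + (k : ℂ) * ((b k : ℂ) - (a k : ℂ) * I) * Complex.exp (-((θ k : ℂ) * I))
          * (Complex.exp ((n:ℂ) * t * I) * Complex.exp (-((((k:ℝ) * t : ℝ) : ℂ) * I)))
        = Complex.exp ((n:ℂ) * t * I) * ((k:ℂ) *
            (((b k : ℂ) + (a k : ℂ) * I) * Complex.exp ((((k:ℝ) * t + θ k : ℝ):ℂ) * I)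
            + ((b k : ℂ) - (a k : ℂ) * I)
              * Complex.exp (-((((k:ℝ) * t + θ k : ℝ):ℂ) * I)))) := by
      rw [show ((((k:ℝ) * t + θ k : ℝ):ℂ) * I) = (((k:ℝ) * t : ℝ):ℂ) * I + (θ k : ℂ) * I by
        push_cast; ring]
      rw [Complex.exp_add, neg_add, Complex.exp_add]
      ring
    rw [e3, show I = Complex.I from rfl, keyid (a k) (b k) ((k:ℝ) * t + θ k)]
    push_cast
    ring
  obtain ⟨k₀, hk₀mem, hk₀⟩ := hnz
  obtain ⟨hk₀1, hk₀n⟩ := Finset.mem_Icc.1 hk₀mem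
  have hc₀ : c k₀ ≠ 0 := by
    rw [hcdef]
    apply mul_ne_zero (mul_ne_zero ?_ ?_) (Complex.exp_ne_zero _)
    · exact_mod_cast Nat.cast_ne_zero.2 (by omega)
    · intro h
      rw [Complex.ext_iff] at h
      simp [I] at h
      rcases hk₀ with h' | h' <;> [exact h' h.2; exact h' h.1]
  have hcoeff : P.coeff (n + k₀) = c k₀ := by
    rw [hPdef, Polynomial.finset_sum_coeff]
    rw [Finset.sum_eq_single k₀]
    · simp only [Polynomial.coeff_add, Polynomial.coeff_C_mul, Polynomial.coeff_X_pow]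
      have h1 : ¬ (n + k₀ = n - k₀) := by omega
      simp [h1]
    · intro j hj hjne
      obtain ⟨hj1, hjn⟩ := Finset.mem_Icc.1 hj
      simp only [Polynomial.coeff_add, Polynomial.coeff_C_mul, Polynomial.coeff_X_pow]
      have h1 : ¬ (k₀ = j) := fun h => hjne h.symm
      have h2 : ¬ (n + k₀ = n - j) := by omega
      simp [h1, h2]
    · intro h; exact absurd hk₀mem h
  have hP0 : P ≠ 0 := fun h => hc₀ (by rw [← hcoeff, h]; simp)
  have hdeg : P.natDegree ≤ 2 * n := by
    rw [hPdef]
    apply Polynomial.natDegree_sum_le_of_forall_le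
    intro k hk
    obtain ⟨hk1, hkn⟩ := Finset.mem_Icc.1 hk
    apply le_trans (Polynomial.natDegree_add_le _ _)
    apply max_le
    · exact le_trans (Polynomial.natDegree_C_mul_le _ _) (by simp; omega)
    · exact le_trans (Polynomial.natDegree_C_mul_le _ _) (by simp; omega)
  set Z : Set ℝ := {t ∈ Set.Ioo α β | q t = 0} with hZdef
  have hmap : ∀ t ∈ Z, P.IsRoot (Complex.exp ((t:ℂ) * I)) := by
    intro t ht
    rw [Polynomial.IsRoot, heval t, ht.2]
    simp
  have hinj : Set.InjOn (fun t : ℝ => Complex.exp ((t:ℂ) * I)) Z := by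
    intro t ht t' ht' h
    rw [show I = Complex.I from rfl, Complex.exp_eq_exp_iff_exists_int] at h
    obtain ⟨m, hm⟩ := h
    have : ((t : ℂ) - t' - m * (2 * π)) * Complex.I = 0 := by
      rw [sub_mul, sub_mul]
      rw [hm]; ring
    rw [mul_eq_zero] at this
    rcases this with h' | h'
    · have : (t : ℂ) = ((t' + m * (2 * π) : ℝ) : ℂ) := by push_cast; linear_combination h'
      have hre : t = t' + m * (2 * π) := by exact_mod_cast this
      have ht1 := ht.1; have ht2 := ht'.1
      have hb1 : t - t' < 2 * π := by
        linarith [ht1.2, ht2.1]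
      have hb2 : -(2 * π) < t - t' := by
        linarith [ht1.1, ht2.2]
      have hπ : (0:ℝ) < π := Real.pi_pos
      have hm0 : m = 0 := by
        by_contra hm0
        rcases lt_or_gt_of_ne hm0 with h | h
        · have : (m : ℝ) ≤ -1 := by exact_mod_cast (by omega : m ≤ -1)
          nlinarith
        · have : (1:ℝ) ≤ (m : ℝ) := by exact_mod_cast h
          nlinarith
      rw [hm0] at hre; simpa using hre
    · exact absurd h' Complex.I_ne_zero
  have hrootfin : {z : ℂ | P.IsRoot z}.Finite := Polynomial.finite_setOf_isRoot hP0
  have hZfin : Z.Finite := by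
    apply Set.Finite.of_finite_image ?_ hinj
    exact hrootfin.subset (by rintro z ⟨t, ht, rfl⟩; exact hmap t ht)
  refine ⟨hZfin.toFinset, ?_, ?_⟩
  · have h1 : Z.ncard = ((fun t : ℝ => Complex.exp ((t:ℂ) * I)) '' Z).ncard :=
      (Set.ncard_image_of_injOn hinj).symm
    have h2 : ((fun t : ℝ => Complex.exp ((t:ℂ) * I)) '' Z).ncard ≤ {z : ℂ | P.IsRoot z}.ncard :=
      Set.ncard_le_ncard (by rintro z ⟨t, ht, rfl⟩; exact hmap t ht) hrootfin
    have h3 : {z : ℂ | P.IsRoot z}.ncard ≤ P.natDegree := by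
      have : {z : ℂ | P.IsRoot z} = ↑P.roots.toFinset := by
        ext z; simp [Polynomial.mem_roots, hP0]
      rw [this, Set.ncard_coe_finset]
      exact le_trans (Multiset.toFinset_card_le _) (Polynomial.card_roots' P)
    calc hZfin.toFinset.card = Z.ncard := (Set.ncard_eq_toFinset_card Z hZfin).symm
      _ ≤ 2 * n := le_trans (h1 ▸ h2) (le_trans h3 hdeg)
  · intro t ht hqt
    rw [Set.Finite.mem_toFinset]
    exact ⟨ht, hqt⟩

/-- Deterministic bound on the Kac functional of a nonzero trigonometric polynomial
`p(t) = ∑_{k=1}^n a_k cos(kt+θ_k) + b_k sin(kt+θ_k)`: for any interval `[α,β]` of length at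
most `2π` and any `δ > 0`, `(1/(2δ)) ∫_α^β |p'(t)| 1_{|p(t)| < δ} dt ≤ 6n`. -/
theorem statement19
    (n : ℕ) (hn : 1 ≤ n) (a b θ : ℕ → ℝ)
    (hnz : ∃ k ∈ Finset.Icc 1 n, a k ≠ 0 ∨ b k ≠ 0)
    (α β : ℝ) (hαβ : α ≤ β) (hlen : β - α ≤ 2 * π) (δ : ℝ) (hδ : 0 < δ) :
    (∫ t in α..β,
        if |∑ k ∈ Finset.Icc 1 n, (a k * Real.cos (k * t + θ k) + b k * Real.sin (k * t + θ k))|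
            < δ then
          |∑ k ∈ Finset.Icc 1 n,
            (k : ℝ) * (-(a k) * Real.sin (k * t + θ k) + b k * Real.cos (k * t + θ k))|
        else 0) / (2 * δ)
      ≤ 6 * n := by
  set p : ℝ → ℝ := fun t => ∑ k ∈ Finset.Icc 1 n,
      (a k * Real.cos (k * t + θ k) + b k * Real.sin (k * t + θ k)) with hpdef
  set q : ℝ → ℝ := fun t => ∑ k ∈ Finset.Icc 1 n,
      (k : ℝ) * (-(a k) * Real.sin (k * t + θ k) + b k * Real.cos (k * t + θ k)) with hqdef
  have hderiv : ∀ t : ℝ, HasDerivAt p (q t) t := by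
    intro t
    apply HasDerivAt.fun_sum
    intro k hk
    have hlin : HasDerivAt (fun t : ℝ => (k : ℝ) * t + θ k) k t := by
      simpa using ((hasDerivAt_id t).const_mul (k : ℝ)).add_const (θ k)
    have h1 := (hlin.cos).const_mul (a k)
    have h2 := (hlin.sin).const_mul (b k)
    convert h1.fun_add h2 using 1
    ring
  have hqcont : Continuous q := by
    apply continuous_finset_sum
    intro k hk
    fun_prop
  obtain ⟨s, hscard, hszero⟩ := zeroCount n hn a b θ hnz α β hlen
  have key := lemB p q hderiv hqcont hδ s α β hαβ hszero
  have h2δ : (0:ℝ) < 2 * δ := by linarith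
  rw [div_le_iff₀ h2δ]
  have hbound : ((s.card : ℝ) + 1) * (2 * δ) ≤ 6 * n * (2 * δ) := by
    have h1 : (s.card : ℝ) + 1 ≤ 6 * n := by
      have : (s.card : ℝ) ≤ 2 * n := by exact_mod_cast hscard
      have : (1:ℝ) ≤ (n:ℝ) := by exact_mod_cast hn
      nlinarith
    nlinarith
  exact le_trans key hbound
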